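/- Let G be the finite simple graph on the five vertices {A, B, C, D, F} whose edges are exactly {A,C}, {A,D}, {C,B}, {D,B}, {C,F}, {F,D}. Then A and B are weakly 2-hyper-connected in G, but A and B are not 2-neighbor-connected in G. -/
import Mathlib


open SimpleGraph

/-- The closed neighborhood `N[x]` is disjoint from `S`. -/
def ClosedNbhdDisj {V : Type*} (G : SimpleGraph V) (S : Finset V) (x : V) : Prop :=
  ∀ u ∈ S, ¬ (x = u ∨ G.Adj x u)

/-- `A` and `B` are weakly `k`-hyper-connected: for every `S ⊆ V \ {A,B}` with
`|S| < k` there is a path from `A` to `B` avoiding `S` such that for every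
edge `{x, y}` of the path, `N[x] ∩ S = ∅` or `N[y] ∩ S = ∅`. -/
def WeaklyHyperConnected {V : Type*} (G : SimpleGraph V) (A B : V) (k : ℕ) : Prop :=
  ∀ S : Finset V, A ∉ S → B ∉ S → S.card < k →
    ∃ p : G.Walk A B, p.IsPath ∧ (∀ v ∈ p.support, v ∉ S) ∧
      p.support.Chain' (fun x y => ClosedNbhdDisj G S x ∨ ClosedNbhdDisj G S y)

/-- `neighbor(V₁) = (V₁ ∪ N(V₁)) \ {A, B}`. -/
def neighborClosure {V : Type*} (G : SimpleGraph V) (A B : V) (V₁ : Finset V) : Set V :=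
  ((↑V₁ : Set V) ∪ {v | ∃ u ∈ V₁, G.Adj u v}) \ {A, B}

/-- `A` and `B` are `k`-neighbor-connected: for every `V₁ ⊆ V \ {A,B}` with
`|V₁| < k` there is a path from `A` to `B` avoiding `neighbor(V₁)`. -/
def KNeighborConnected {V : Type*} (G : SimpleGraph V) (A B : V) (k : ℕ) : Prop :=
  ∀ V₁ : Finset V, A ∉ V₁ → B ∉ V₁ → V₁.card < k →
    ∃ p : G.Walk A B, p.IsPath ∧ ∀ v ∈ p.support, v ∉ neighborClosure G A B V₁

/-- The graph of Example 2: vertices `A = 0`, `B = 1`, `C = 2`, `D = 3`,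
`F = 4` and edges `{A,C}, {A,D}, {C,B}, {D,B}, {C,F}, {F,D}`. -/
def exGraph5 : SimpleGraph (Fin 5) :=
  SimpleGraph.fromRel (fun x y =>
    (x, y) ∈ [((0 : Fin 5), (2 : Fin 5)), (0, 3), (2, 1), (3, 1), (2, 4), (4, 3)])

instance : DecidableRel exGraph5.Adj := fun a b => by
  unfold exGraph5
  rw [SimpleGraph.fromRel_adj]
  infer_instance

/-- The path `0 - 2 - 1`. -/
def pathC : exGraph5.Walk 0 1 :=
  Walk.cons (show exGraph5.Adj 0 2 by decide)
    (Walk.cons (show exGraph5.Adj 2 1 by decide) Walk.nil)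

/-- The path `0 - 3 - 1`. -/
def pathD : exGraph5.Walk 0 1 :=
  Walk.cons (show exGraph5.Adj 0 3 by decide)
    (Walk.cons (show exGraph5.Adj 3 1 by decide) Walk.nil)

lemma pathC_support : pathC.support = [0, 2, 1] := rfl
lemma pathD_support : pathD.support = [0, 3, 1] := rfl

lemma pathC_isPath : pathC.IsPath := by
  rw [Walk.isPath_def, pathC_support]; decide

lemma pathD_isPath : pathD.IsPath := by
  rw [Walk.isPath_def, pathD_support]; decide

instance (S : Finset (Fin 5)) (x : Fin 5) : Decidable (ClosedNbhdDisj exGraph5 S x) := by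
  unfold ClosedNbhdDisj; infer_instance

/-- In the graph of Example 2, `A` and `B` are weakly 2-hyper-connected but
not 2-neighbor-connected. -/
theorem exGraph5_weaklyHyperConnected_not_twoNeighborConnected :
    WeaklyHyperConnected exGraph5 0 1 2 ∧ ¬ KNeighborConnected exGraph5 0 1 2 := by
  constructor
  · intro S h0 h1 hc
    have hle : S.card ≤ 1 := Nat.lt_succ_iff.mp hc
    obtain ⟨x, hx⟩ := Finset.card_le_one_iff_subset_singleton.mp hle
    rcases Finset.subset_singleton_iff.mp hx with rfl | rfl
    · exact ⟨pathC, pathC_isPath, by simp, by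
        rw [pathC_support]; exact List.isChain_cons_cons.mpr ⟨Or.inl (by decide),
          List.isChain_cons_cons.mpr ⟨Or.inl (by decide), List.isChain_singleton _⟩⟩⟩
    · fin_cases x
      · simp at h0
      · simp at h1
      · -- S = {2}, use 0 - 3 - 1, vertex 3 has closed nbhd disjoint from {2}
        exact ⟨pathD, pathD_isPath, by rw [pathD_support]; decide, by
          rw [pathD_support]; exact List.isChain_cons_cons.mpr ⟨Or.inr (by decide),
            List.isChain_cons_cons.mpr ⟨Or.inl (by decide), List.isChain_singleton _⟩⟩⟩
      · -- S = {3}, use 0 - 2 - 1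
        exact ⟨pathC, pathC_isPath, by rw [pathC_support]; decide, by
          rw [pathC_support]; exact List.isChain_cons_cons.mpr ⟨Or.inr (by decide),
            List.isChain_cons_cons.mpr ⟨Or.inl (by decide), List.isChain_singleton _⟩⟩⟩
      · -- S = {4}, use 0 - 2 - 1, endpoints 0 and 1 not near 4
        exact ⟨pathC, pathC_isPath, by rw [pathC_support]; decide, by
          rw [pathC_support]; exact List.isChain_cons_cons.mpr ⟨Or.inl (by decide),
            List.isChain_cons_cons.mpr ⟨Or.inr (by decide), List.isChain_singleton _⟩⟩⟩
  · intro h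
    obtain ⟨p, hp, hav⟩ := h {4} (by decide) (by decide) (by decide)
    cases p with
    | @cons _ v _ hadj q =>
      have hv : v ∈ (Walk.cons hadj q).support := by
        rw [Walk.support_cons]
        exact List.mem_cons_of_mem _ q.start_mem_support
      have := hav v hv
      apply this
      have hv23 : v = 2 ∨ v = 3 := (by decide : ∀ w, exGraph5.Adj 0 w → w = 2 ∨ w = 3) v hadj
      constructor
      · right
        rcases hv23 with rfl | rfl
        · exact ⟨4, by decide, by decide⟩
        · exact ⟨4, by decide, by decide⟩
      · rcases hv23 with rfl | rfl <;> simp
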